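/- Suppose j : V → M is an elementary embedding (e.g., an ultrapower by a δ⁺-complete ultrafilter) with crit(j) > δ and sup(j''κ) < j(κ), where κ > δ are regular. If T is a tree of height κ with a δ-ascent path ⟨f_α : α < κ⟩, then there exist an unbounded set A ⊆ κ and θ < δ such that for all α₂ < α₁ in A and all υ with θ ≤ υ < δ, f_{α₂}(υ) <_T f_{α₁}(υ). -/

import Mathlib

universe u

/-- An abstract tree: a strict order in which the set of predecessors of any node
is linearly ordered, together with a height (level) function. -/
structure PTree : Type (u + 1) where
  Node : Type u
  lt : Node → Node → Prop
  lt_trans : ∀ {a b c : Node}, lt a b → lt b c → lt a c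
  ht : Node → Ordinal.{u}
  lt_ht : ∀ {a b : Node}, lt a b → ht a < ht b
  below_linear : ∀ {a b c : Node}, lt a c → lt b c → lt a b ∨ a = b ∨ lt b a

/-- `T` has height `κ`: all nodes live on levels `< κ` and every level `< κ` is nonempty. -/
def PTree.HeightIs (T : PTree.{u}) (κ : Ordinal.{u}) : Prop :=
  (∀ x : T.Node, T.ht x < κ) ∧ ∀ α < κ, ∃ x : T.Node, T.ht x = α

def PTree.IsAntichainIn (T : PTree.{u}) (A : Set T.Node) : Prop :=
  ∀ a ∈ A, ∀ b ∈ A, a ≠ b → ¬ T.lt a b ∧ ¬ T.lt b a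

def PTree.IsChainIn (T : PTree.{u}) (C : Set T.Node) : Prop :=
  ∀ a ∈ C, ∀ b ∈ C, a = b ∨ T.lt a b ∨ T.lt b a

/-- `T` is a `κ`-Suslin tree: it has height `κ` and every antichain and every chain
has size `< κ`. -/
def PTree.IsSuslin (T : PTree.{u}) (κ : Cardinal.{u}) : Prop :=
  T.HeightIs κ.ord ∧ (∀ A : Set T.Node, T.IsAntichainIn A → Cardinal.mk A < κ) ∧
    ∀ C : Set T.Node, T.IsChainIn C → Cardinal.mk C < κ

/-- `f` is a `δ`-ascent path through the tree `T` of height `κ`: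
`f α : δ → Lev_α(T)` and for `α < β < κ` the set of `υ < δ` with
`f α υ <_T f β υ` is co-bounded in `δ`. -/
def PTree.AscentPath (T : PTree.{u}) (κ δ : Ordinal.{u})
    (f : Ordinal.{u} → Ordinal.{u} → T.Node) : Prop :=
  (∀ α < κ, ∀ υ < δ, T.ht (f α υ) = α) ∧
    ∀ α β : Ordinal.{u}, α < β → β < κ →
      ∃ θ < δ, ∀ υ : Ordinal.{u}, θ ≤ υ → υ < δ → T.lt (f α υ) (f β υ)

/-- `U` is `δ`-complete: it is closed under intersections of fewer than `δ` many sets. -/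
def UFComplete {α : Type u} (δ : Cardinal.{u}) (U : Ultrafilter α) : Prop :=
  ∀ s : Set (Set α), Cardinal.mk s < δ → (∀ t ∈ s, t ∈ U) → ⋂₀ s ∈ U

/-- `U` is uniform: every member of `U` has full cardinality. -/
def UFUniform {α : Type u} (U : Ultrafilter α) : Prop :=
  ∀ A ∈ U, Cardinal.mk A = Cardinal.mk α

/-- Abstracting an elementary embedding `j : V → M` (e.g. an ultrapower by a `δ⁺`-complete
ultrafilter) with `crit j > δ` and `sup (j '' κ) < j κ`, where `κ > δ` are regular:
`T'` plays the role of `j(T)`, `f'` of `j(f)` (a `δ`-ascent path of the tree `j(T)` of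
height `j(κ)`, by elementarity), `jN` is the action of `j` on nodes, and `β = sup (j '' κ)`.
Then there are an unbounded `A ⊆ κ` and `θ < δ` such that for all `α₂ < α₁` in `A`
and all `υ` with `θ ≤ υ < δ`, `f α₂ υ <_T f α₁ υ`. -/
theorem ascent_path_coherent_on_unbounded_set
    (κ δ : Cardinal.{u}) (hδκ : δ < κ) (hκ : κ.IsRegular) (hδ : δ.IsRegular)
    (T T' : PTree.{u}) (hT : T.HeightIs κ.ord)
    (f : Ordinal.{u} → Ordinal.{u} → T.Node) (hf : T.AscentPath κ.ord δ.ord f)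
    (j : Ordinal.{u} → Ordinal.{u}) (hj : StrictMono j)
    (hcrit : ∀ o : Ordinal.{u}, o ≤ δ.ord → j o = o)
    (f' : Ordinal.{u} → Ordinal.{u} → T'.Node)
    (hf' : T'.AscentPath (j κ.ord) δ.ord f')
    (β : Ordinal.{u}) (hβub : ∀ α < κ.ord, j α < β) (hβlt : β < j κ.ord)
    (jN : T.Node → T'.Node)
    (hjN : ∀ α < κ.ord, ∀ υ < δ.ord, jN (f α υ) = f' (j α) υ)
    (hreflect : ∀ a b : T.Node, T'.lt (jN a) (jN b) → T.lt a b) :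
    ∃ A : Set Ordinal.{u}, (∀ a ∈ A, a < κ.ord) ∧ (∀ α < κ.ord, ∃ a ∈ A, α < a) ∧
      ∃ θ < δ.ord, ∀ α₂ ∈ A, ∀ α₁ ∈ A, α₂ < α₁ →
        ∀ υ : Ordinal.{u}, θ ≤ υ → υ < δ.ord → T.lt (f α₂ υ) (f α₁ υ) := by
  classical
  -- choose θ for each α
  have hθex : ∀ α < κ.ord, ∃ θ < δ.ord, ∀ υ : Ordinal.{u}, θ ≤ υ → υ < δ.ord →
      T'.lt (f' (j α) υ) (f' β υ) := fun α hα => hf'.2 (j α) β (hβub α hα) hβlt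
  let θf : Ordinal.{u} → Ordinal.{u} := fun α =>
    if h : α < κ.ord then Classical.choose (hθex α h) else 0
  have hθlt : ∀ α (h : α < κ.ord), θf α < δ.ord := by
    intro α h; simp only [θf, dif_pos h]; exact (Classical.choose_spec (hθex α h)).1
  have hθspec : ∀ α (h : α < κ.ord), ∀ υ : Ordinal.{u}, θf α ≤ υ → υ < δ.ord →
      T'.lt (f' (j α) υ) (f' β υ) := by
    intro α h; simp only [θf, dif_pos h]; exact (Classical.choose_spec (hθex α h)).2
  -- find θ₀ with unboundedly many α
  have hklim : Order.IsSuccLimit κ.ord := Cardinal.isSuccLimit_ord hκ.aleph0_le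
  have key : ∃ θ₀ < δ.ord, ∀ α < κ.ord, ∃ a, α < a ∧ a < κ.ord ∧ θf a = θ₀ := by
    by_contra hcon
    push_neg at hcon
    choose g hg hg2 using hcon
    let G : δ.ord.ToType → Ordinal.{u} := fun i => g (Ordinal.ToType.mk (o := δ.ord) |>.symm i)
      ((Ordinal.ToType.mk (o := δ.ord) |>.symm i).2)
    have hGlt : ∀ i, G i < κ.ord := fun i => hg _ _
    have hcard : Cardinal.mk δ.ord.ToType < κ.ord.cof := by
      rw [Cardinal.mk_toType, Cardinal.card_ord, hκ.cof_eq]; exact hδκ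
    have hsup : iSup G < κ.ord := Ordinal.iSup_lt_ord hcard hGlt
    set a := (iSup G) + 1 with ha
    have haκ : a < κ.ord := by rw [ha, ← Order.succ_eq_add_one]; exact hklim.succ_lt hsup
    have hθa := hθlt a haκ
    have heq : (Ordinal.ToType.mk (o := δ.ord) |>.symm (Ordinal.ToType.mk (o := δ.ord) ⟨θf a, hθa⟩)) =
        ⟨θf a, hθa⟩ := (Ordinal.ToType.mk (o := δ.ord)).symm_apply_apply _
    have hga : g (θf a) hθa ≤ iSup G := by
      calc g (θf a) hθa = G (Ordinal.ToType.mk (o := δ.ord) ⟨θf a, hθa⟩) := by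
            simp only [G, heq]
        _ ≤ iSup G := le_ciSup (Ordinal.bddAbove_range _) _
    exact hg2 (θf a) hθa a (hga.trans_lt (lt_add_one _)) haκ rfl
  obtain ⟨θ₀, hθ₀, hA⟩ := key
  refine ⟨{a | a < κ.ord ∧ θf a = θ₀}, fun a ha => ha.1, ?_, θ₀, hθ₀, ?_⟩
  · intro α hα
    obtain ⟨a, h1, h2, h3⟩ := hA α hα
    exact ⟨a, ⟨h2, h3⟩, h1⟩
  · rintro α₂ ⟨hα₂, hθ₂⟩ α₁ ⟨hα₁, hθ₁⟩ hlt υ hθυ hυ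
    have h2 : T'.lt (f' (j α₂) υ) (f' β υ) := hθspec α₂ hα₂ υ (hθ₂ ▸ hθυ) hυ
    have h1 : T'.lt (f' (j α₁) υ) (f' β υ) := hθspec α₁ hα₁ υ (hθ₁ ▸ hθυ) hυ
    have hj2 : j α₂ < j κ.ord := hj hα₂
    have hj1 : j α₁ < j κ.ord := hj hα₁
    have hht2 : T'.ht (f' (j α₂) υ) = j α₂ := hf'.1 (j α₂) hj2 υ hυ
    have hht1 : T'.ht (f' (j α₁) υ) = j α₁ := hf'.1 (j α₁) hj1 υ hυ
    have hjlt : j α₂ < j α₁ := hj hlt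
    have hlt' : T'.lt (f' (j α₂) υ) (f' (j α₁) υ) := by
      rcases T'.below_linear h2 h1 with h | h | h
      · exact h
      · exfalso; rw [h, hht1] at hht2; exact (hjlt.ne' hht2).elim
      · exfalso
        have := T'.lt_ht h
        rw [hht1, hht2] at this
        exact absurd this hjlt.asymm
    apply hreflect
    rw [hjN α₂ hα₂ υ hυ, hjN α₁ hα₁ υ hυ]
    exact hlt'
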